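/- For k ≥ 2, the upper total domination number of the k-th power of the cycle C_{2k+3} equals 2. -/
import Mathlib


variable {V : Type*}

/-- `S` is a total dominating set of `G`: every vertex has a neighbor in `S`. -/
def isTDSet (G : SimpleGraph V) (S : Set V) : Prop := ∀ v : V, ∃ u ∈ S, G.Adj v u

/-- `S` is a minimal total dominating set of `G`. -/
def isMinTDSet (G : SimpleGraph V) (S : Set V) : Prop :=
  isTDSet G S ∧ ∀ T : Set V, T ⊂ S → ¬ isTDSet G T

/-- Upper total domination number `Γ_t`. -/
noncomputable def upperTD (G : SimpleGraph V) [Fintype V] : ℕ :=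
  sSup {n | ∃ S : Finset V, isMinTDSet G ↑S ∧ S.card = n}

/-- Total domination number `γ_t`. -/
noncomputable def totalDomNum (G : SimpleGraph V) [Fintype V] : ℕ :=
  sInf {n | ∃ S : Finset V, isTDSet G ↑S ∧ S.card = n}

/-- `S` is an open-open irredundant set: each `v ∈ S` has a neighbor not adjacent
to any other vertex of `S`, i.e. `N(v) \ N(S \ {v}) ≠ ∅`. -/
def isOOIrr (G : SimpleGraph V) (S : Set V) : Prop :=
  ∀ v ∈ S, ∃ w, G.Adj v w ∧ ∀ u ∈ S, u ≠ v → ¬ G.Adj u w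

/-- Open-open irredundance number `OOIR`. -/
noncomputable def ooirNum (G : SimpleGraph V) [Fintype V] : ℕ :=
  sSup {n | ∃ S : Finset V, isOOIrr G ↑S ∧ S.card = n}

/-- `M` is an induced matching: a set of edges of `G` whose endpoints induce a
1-regular subgraph (no two distinct edges share or join endpoints). -/
def isInducedMatching (G : SimpleGraph V) (M : Set (Sym2 V)) : Prop :=
  (∀ e ∈ M, e ∈ G.edgeSet) ∧
  ∀ e ∈ M, ∀ f ∈ M, e ≠ f → ∀ u ∈ e, ∀ v ∈ f, u ≠ v ∧ ¬ G.Adj u v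

/-- Induced matching number `ν_I`. -/
noncomputable def inducedMatchingNum (G : SimpleGraph V) [Fintype V] : ℕ :=
  sSup {n | ∃ M : Finset (Sym2 V), isInducedMatching G ↑M ∧ M.card = n}

/-- `L` is a total dominating sequence of `G`. -/
def isTDSeq (G : SimpleGraph V) (L : List V) : Prop :=
  L.Nodup ∧ isTDSet G {v | v ∈ L} ∧
  ∀ (i : ℕ) (h : i < L.length), ∃ w, G.Adj L[i] w ∧ ∀ u ∈ L.take i, ¬ G.Adj u w

/-- Grundy total domination number. -/
noncomputable def grundyTD (G : SimpleGraph V) [Fintype V] : ℕ :=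
  sSup {n | ∃ L : List V, isTDSeq G L ∧ L.length = n}


instance (k : ℕ) : NeZero (2 * k + 3) := ⟨by omega⟩

/-- The `k`-th power of the cycle `C_{2k+3}`, on vertex set `ZMod (2k+3)`:
`i` and `j` are adjacent iff they are distinct and at cyclic distance at most `k`. -/
def cyclePower (k : ℕ) : SimpleGraph (ZMod (2 * k + 3)) :=
  SimpleGraph.fromRel (fun i j => ∃ d : ℕ, d ≤ k ∧ j = i + (d : ZMod (2 * k + 3)))

lemma valcast (k : ℕ) (x : ZMod (2*k+3)) : ((x.val : ℕ) : ZMod (2*k+3)) = x := by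
  simp [ZMod.natCast_val, ZMod.cast_id]

lemma adj_iff (k : ℕ) (i j : ZMod (2*k+3)) :
    (cyclePower k).Adj i j ↔
      (1 ≤ (j-i).val ∧ (j-i).val ≤ k) ∨ (k+3 ≤ (j-i).val ∧ (j-i).val ≤ 2*k+2) := by
  rw [cyclePower, SimpleGraph.fromRel_adj]
  constructor
  · rintro ⟨hne, (⟨d, hd, rfl⟩ | ⟨d, hd, hij⟩)⟩
    · have h1 : (i + (d:ZMod (2*k+3)) - i) = (d : ZMod (2*k+3)) := by ring
      rw [h1, ZMod.val_cast_of_lt (by omega)]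
      have : d ≠ 0 := by rintro rfl; simp at hne
      omega
    · have h1 : j - i = -(d : ZMod (2*k+3)) := by rw [hij]; ring
      have hd0 : d ≠ 0 := by rintro rfl; simp at hij; exact (hij ▸ hne) rfl
      have h2 : ((d:ZMod (2*k+3))) ≠ 0 := by
        rw [Ne, ← ZMod.val_eq_zero, ZMod.val_cast_of_lt (by omega)]; exact hd0
      rw [h1, ZMod.neg_val, if_neg h2, ZMod.val_cast_of_lt (by omega)]
      omega
  · intro h
    have hne : i ≠ j := by
      rintro rfl
      simp at h
    refine ⟨hne, ?_⟩
    rcases h with ⟨h1, h2⟩ | ⟨h1, h2⟩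
    · left
      exact ⟨(j-i).val, h2, by rw [valcast]; ring⟩
    · right
      refine ⟨2*k+3 - (j-i).val, by omega, ?_⟩
      have : ((2*k+3 - (j-i).val : ℕ) : ZMod (2*k+3)) = -(j - i) := by
        rw [Nat.cast_sub (by omega)]
        simp [valcast]
      rw [this]; ring

lemma nonadj_iff (k : ℕ) (i j : ZMod (2*k+3)) :
    ¬ (cyclePower k).Adj i j ↔
      ((j-i).val = 0 ∨ (j-i).val = k+1 ∨ (j-i).val = k+2) := by
  rw [adj_iff]
  have := ZMod.val_lt (j - i)
  omega

lemma modcase (a n : ℕ) (h : a < 2*n) (hn : 0 < n) :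
    a % n = if a < n then a else a - n := by
  split
  · exact Nat.mod_eq_of_lt ‹_›
  · rw [Nat.mod_eq_sub_mod (by omega), Nat.mod_eq_of_lt (by omega)]

lemma val_sub_add (k : ℕ) (a b c : ZMod (2*k+3)) :
    (c - a).val = ((c-b).val + (b-a).val) % (2*k+3) := by
  have h : c - a = (c-b) + (b-a) := by ring
  rw [h, ZMod.val_add]

lemma pair_td (k : ℕ) (hk : 2 ≤ k) (a b : ZMod (2*k+3))
    (h : (2 ≤ (b-a).val ∧ (b-a).val ≤ k) ∨ (k+3 ≤ (b-a).val ∧ (b-a).val ≤ 2*k+1)) :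
    isTDSet (cyclePower k) {a, b} := by
  intro v
  by_cases hva : (cyclePower k).Adj v a
  · exact ⟨a, by simp, hva⟩
  · refine ⟨b, by simp, ?_⟩
    rw [nonadj_iff] at hva
    rw [adj_iff]
    have h1 : (b - v).val = ((b-a).val + (a-v).val) % (2*k+3) := val_sub_add k v a b
    rw [modcase _ _ (by have := ZMod.val_lt (b-a); have := ZMod.val_lt (a-v); omega) (by omega)] at h1
    have h2 := ZMod.val_lt (a-v)
    have h3 := ZMod.val_lt (b-v)
    split_ifs at h1 <;> omega

lemma td_pair_exists {V : Type*} (G : SimpleGraph V) (S : Set V) [Nonempty V]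
    (h : isTDSet G S) : ∃ u ∈ S, ∃ w ∈ S, u ≠ w := by
  obtain ⟨u, hu, _⟩ := h (Classical.arbitrary V)
  obtain ⟨w, hw, huw⟩ := h u
  exact ⟨u, hu, w, hw, fun he => G.irrefl (he ▸ huw)⟩

lemma pair_min_td (k : ℕ) (hk : 2 ≤ k) (a b : ZMod (2*k+3))
    (h : (2 ≤ (b-a).val ∧ (b-a).val ≤ k) ∨ (k+3 ≤ (b-a).val ∧ (b-a).val ≤ 2*k+1)) :
    isMinTDSet (cyclePower k) {a, b} := by
  refine ⟨pair_td k hk a b h, ?_⟩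
  intro T hT hTtd
  obtain ⟨u, hu, w, hw, huw⟩ := td_pair_exists _ _ hTtd
  apply hT.2
  intro x hx
  have hsub := hT.1
  have hu' := hsub hu
  have hw' := hsub hw
  simp only [Set.mem_insert_iff, Set.mem_singleton_iff] at hu' hw' hx ⊢
  rcases hu' with rfl | rfl <;> rcases hw' with rfl | rfl <;> rcases hx with rfl | rfl <;>
    first | exact hu | exact hw | simp_all

lemma sub_ne_zero_val (k : ℕ) {a b : ZMod (2*k+3)} (h : a ≠ b) : (b - a).val ≠ 0 := by
  rw [Ne, ZMod.val_eq_zero, sub_eq_zero]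
  exact fun he => h he.symm

lemma card_le_two (k : ℕ) (hk : 2 ≤ k) (S : Finset (ZMod (2*k+3)))
    (hS : isMinTDSet (cyclePower k) ↑S) : S.card ≤ 2 := by
  by_contra hc
  push_neg at hc
  by_cases hA : ∃ a ∈ S, ∃ b ∈ S,
      (2 ≤ (b-a).val ∧ (b-a).val ≤ k) ∨ (k+3 ≤ (b-a).val ∧ (b-a).val ≤ 2*k+1)
  · obtain ⟨a, ha, b, hb, hab⟩ := hA
    refine hS.2 {a, b} ⟨?_, ?_⟩ (pair_td k hk a b hab)
    · intro x hx
      simp only [Set.mem_insert_iff, Set.mem_singleton_iff] at hx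
      rcases hx with rfl | rfl <;> simpa
    · intro hsub
      have h1 : S ⊆ ({a, b} : Finset _) := by
        intro x hx
        have := hsub (by simpa using hx)
        simpa using this
      have h2 := Finset.card_le_card h1
      have h3 : ({a, b} : Finset (ZMod (2*k+3))).card ≤ 2 :=
        (Finset.card_insert_le _ _).trans (by simp)
      omega
  · push_neg at hA
    -- all pairwise diffs in {1, k+1, k+2, 2k+2}
    have key : ∀ a ∈ S, ∀ b ∈ S, a ≠ b →
        (b-a).val = 1 ∨ (b-a).val = k+1 ∨ (b-a).val = k+2 ∨ (b-a).val = 2*k+2 := by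
      intro a ha b hb hab
      have h1 := hA a ha b hb
      have h2 := ZMod.val_lt (b-a)
      have h3 := sub_ne_zero_val k hab
      omega
    -- get three distinct elements
    have h1lt : 1 < S.card := by omega
    obtain ⟨a, ha, b, hb, hab⟩ := Finset.one_lt_card.1 h1lt
    have hns : ¬ S ⊆ ({a, b} : Finset _) := by
      intro h1
      have h2 := Finset.card_le_card h1
      have h3 : ({a, b} : Finset (ZMod (2*k+3))).card ≤ 2 :=
        (Finset.card_insert_le _ _).trans (by simp)
      omega
    obtain ⟨c, hc', hcn⟩ := Finset.not_subset.1 hns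
    simp only [Finset.mem_insert, Finset.mem_singleton, not_or] at hcn
    obtain ⟨hca, hcb⟩ := hcn
    -- no fourth element
    have hmem : ∀ v ∈ S, v = a ∨ v = b ∨ v = c := by
      intro d hd
      by_contra hdn
      push_neg at hdn
      obtain ⟨hda, hdb, hdc⟩ := hdn
      have x1 := key a ha b hb hab
      have x2 := key a ha c hc' (Ne.symm hca)
      have x3 := key a ha d hd (Ne.symm hda)
      have x4 := key b hb c hc' (Ne.symm hcb)
      have x5 := key b hb d hd (Ne.symm hdb)
      have x6 := key c hc' d hd (Ne.symm hdc)
      have r1 := val_sub_add k a b c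
      have r2 := val_sub_add k a b d
      have r3 := val_sub_add k b c d
      rw [modcase _ _ (by have := ZMod.val_lt (c-b); have := ZMod.val_lt (b-a); omega) (by omega)] at r1
      rw [modcase _ _ (by have := ZMod.val_lt (d-b); have := ZMod.val_lt (b-a); omega) (by omega)] at r2
      rw [modcase _ _ (by have := ZMod.val_lt (d-c); have := ZMod.val_lt (c-b); omega) (by omega)] at r3
      split_ifs at r1 r2 r3 <;> omega
    -- arithmetic on the three diffs
    have x1 := key a ha b hb hab
    have x4 := key b hb c hc' (Ne.symm hcb)
    have x2 := key a ha c hc' (Ne.symm hca)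
    have r1 := val_sub_add k a b c
    rw [modcase _ _ (by have := ZMod.val_lt (c-b); have := ZMod.val_lt (b-a); omega) (by omega)] at r1
    have hiso :
        (((b-a).val = k+1 ∨ (b-a).val = k+2) ∧ ((c-a).val = k+1 ∨ (c-a).val = k+2)) ∨
        (((b-a).val = k+1 ∨ (b-a).val = k+2) ∧ ((c-b).val = k+1 ∨ (c-b).val = k+2)) ∨
        (((c-b).val = k+1 ∨ (c-b).val = k+2) ∧ ((c-a).val = k+1 ∨ (c-a).val = k+2)) := by
      split_ifs at r1 <;> omega
    -- in each case some vertex of S has no neighbour in S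
    have contra : ∀ t : ZMod (2*k+3), t ∈ S →
        (∀ s ∈ S, ¬ (cyclePower k).Adj t s) → False := by
      intro t ht hiso'
      obtain ⟨u, hu, hadj⟩ := hS.1 t
      exact hiso' u (by simpa using hu) hadj
    rcases hiso with ⟨h1, h2⟩ | ⟨h1, h2⟩ | ⟨h1, h2⟩
    · refine contra a ha ?_
      intro s hs
      rcases hmem s hs with rfl | rfl | rfl
      · exact (cyclePower k).irrefl
      · rw [nonadj_iff]; omega
      · rw [nonadj_iff]; omega
    · refine contra b hb ?_
      intro s hs
      rcases hmem s hs with rfl | rfl | rfl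
      · rw [(cyclePower k).adj_comm, nonadj_iff]; omega
      · exact (cyclePower k).irrefl
      · rw [nonadj_iff]; omega
    · refine contra c hc' ?_
      intro s hs
      rcases hmem s hs with rfl | rfl | rfl
      · rw [(cyclePower k).adj_comm, nonadj_iff]; omega
      · rw [(cyclePower k).adj_comm, nonadj_iff]; omega
      · exact (cyclePower k).irrefl

/-- For `k ≥ 2`, `Γ_t(C_{2k+3}^k) = 2`. -/
theorem stmt6 (k : ℕ) (hk : 2 ≤ k) :
    upperTD (cyclePower k) = 2 := by
  have hval2 : ((2 : ZMod (2*k+3)) - 0).val = 2 := by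
    rw [sub_zero]
    have : (2 : ZMod (2*k+3)) = ((2 : ℕ) : ZMod (2*k+3)) := by norm_cast
    rw [this, ZMod.val_cast_of_lt (by omega)]
  have hne : (0 : ZMod (2*k+3)) ≠ 2 := by
    intro h
    have := hval2
    rw [← h, sub_zero, ZMod.val_zero] at this
    omega
  have hmin : isMinTDSet (cyclePower k) ({0, 2} : Set (ZMod (2*k+3))) :=
    pair_min_td k hk 0 2 (Or.inl ⟨by omega, by omega⟩)
  have hmem : 2 ∈ {n | ∃ S : Finset (ZMod (2*k+3)), isMinTDSet (cyclePower k) ↑S ∧ S.card = n} := by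
    refine ⟨({0, 2} : Finset (ZMod (2*k+3))), ?_, ?_⟩
    · have : (↑({0, 2} : Finset (ZMod (2*k+3))) : Set (ZMod (2*k+3))) = {0, 2} := by simp
      rw [this]; exact hmin
    · rw [Finset.card_insert_of_notMem (by simpa using hne), Finset.card_singleton]
  have hub : ∀ n ∈ {n | ∃ S : Finset (ZMod (2*k+3)), isMinTDSet (cyclePower k) ↑S ∧ S.card = n},
      n ≤ 2 := by
    rintro n ⟨S, hS, rfl⟩
    exact card_le_two k hk S hS
  exact le_antisymm (csSup_le ⟨2, hmem⟩ hub) (le_csSup ⟨2, hub⟩ hmem)
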